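/- Under the Harten setup, regard Ŝ, F̂^{(i)}, Ĝ^{(i)} as functions of the conservative variables on the open set D = {(ρ, m, e) : ρ > 0, (γ−1)(e − ‖m‖²/(2ρ)) > 0}. Let L > 0 and let U : ℝ × ℝ^d → ℝ^{d+2} be continuously differentiable, taking values in D, satisfying the Euler equations pointwise ∂U/∂t + Σ_{i=1}^{d} ∂/∂x_i [F̂^{(i)}(U)] = 0, and spatially periodic: U(t, x + L·e_i) = U(t, x) for all t, x and each standard basis vector e_i of ℝ^d. Then the total entropy t ↦ ∫_{[0,L]^d} Ŝ(U(t,x)) dx is constant in t (its derivative vanishes for all t). -/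

import Mathlib

open MeasureTheory

/-- Harten's entropy function `S = β·ρ·(p·ρ^(−γ))^(1/(α+γ))`. -/
noncomputable def hartenS (γ α β ρ p : ℝ) : ℝ :=
  β * ρ * (p * ρ ^ (-γ)) ^ (1 / (α + γ))

/-- The Euler flux `F^(i) = (ρV_i, ρV_iV + p·e_i, (e+p)V_i) ∈ ℝ^(d+2)`. -/
noncomputable def eulerFlux (d : ℕ) (γ ρ p : ℝ) (V : Fin d → ℝ) (i : Fin d) :
    Fin (d + 2) → ℝ :=
  Fin.cons (α := fun _ => ℝ) (ρ * V i)
    (Fin.snoc (fun j => ρ * V i * V j + p * (if j = i then 1 else 0))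
      ((p / (γ - 1) + ρ * (∑ k, V k ^ 2) / 2 + p) * V i))

/-- Pressure as a function of the conservative variables `U = (ρ, m, e)`. -/
noncomputable def pOf (d : ℕ) (γ : ℝ) (U : Fin (d + 2) → ℝ) : ℝ :=
  (γ - 1) * (U (Fin.last (d + 1)) -
    (∑ i : Fin d, U (Fin.castSucc (Fin.succ i)) ^ 2) / (2 * U 0))

/-- Velocity `V = m/ρ` as a function of the conservative variables. -/
noncomputable def vOf (d : ℕ) (U : Fin (d + 2) → ℝ) : Fin d → ℝ :=
  fun i => U (Fin.castSucc (Fin.succ i)) / U 0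

/-- Harten's entropy function `Ŝ` as a function of the conservative variables. -/
noncomputable def hartenShat (d : ℕ) (γ α β : ℝ) (U : Fin (d + 2) → ℝ) : ℝ :=
  hartenS γ α β (U 0) (pOf d γ U)

/-- Euler flux `F̂^(i)` as a function of the conservative variables. -/
noncomputable def fluxHat (d : ℕ) (γ : ℝ) (i : Fin d) (U : Fin (d + 2) → ℝ) :
    Fin (d + 2) → ℝ :=
  eulerFlux d γ (U 0) (pOf d γ U) (vOf d U) i

/-! ### Component formulas for the flux in conservative variables -/

lemma fluxHat_zero {d : ℕ} {γ : ℝ} (i : Fin d) {W : Fin (d + 2) → ℝ} (h : W 0 ≠ 0) :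
    fluxHat d γ i W 0 = W (Fin.castSucc i.succ) := by
  simp only [fluxHat, eulerFlux, Fin.cons_zero, vOf]
  field_simp

lemma fluxHat_mid {d : ℕ} {γ : ℝ} (i j : Fin d) {W : Fin (d + 2) → ℝ} (h : W 0 ≠ 0) :
    fluxHat d γ i W (Fin.castSucc j.succ)
      = W (Fin.castSucc i.succ) * W (Fin.castSucc j.succ) / W 0
        + pOf d γ W * (if j = i then 1 else 0) := by
  have hidx : Fin.castSucc j.succ = (Fin.castSucc j).succ := by
    exact (Fin.succ_castSucc j).symm
  simp only [fluxHat, eulerFlux, hidx, Fin.cons_succ, Fin.snoc_castSucc, vOf]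
  congr 1
  field_simp

lemma fluxHat_last {d : ℕ} {γ : ℝ} (i : Fin d) {W : Fin (d + 2) → ℝ} (h : W 0 ≠ 0)
    (hγ : γ - 1 ≠ 0) :
    fluxHat d γ i W (Fin.last (d + 1))
      = (W (Fin.last (d + 1)) + pOf d γ W) * (W (Fin.castSucc i.succ) / W 0) := by
  have hidx : Fin.last (d + 1) = (Fin.last d).succ := by simp [Fin.succ_last]
  simp only [fluxHat, eulerFlux, hidx, Fin.cons_succ, Fin.snoc_last, vOf]
  have hsq : ∑ k : Fin d, (W (Fin.castSucc k.succ) / W 0) ^ 2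
      = (∑ k : Fin d, W (Fin.castSucc k.succ) ^ 2) / W 0 ^ 2 := by
    rw [Finset.sum_div]
    exact Finset.sum_congr rfl fun k _ => by rw [div_pow]
  rw [hsq, pOf]
  rw [← hidx]
  field_simp
  ring


theorem harten_alg (d : ℕ) (γ β kap r p e M R R1 A Bs : ℝ)
    (m a c K P : Fin d → ℝ) (b : Fin d → Fin d → ℝ)
    (a0 c0 P0 : ℝ) (b0 : Fin d → ℝ)
    (hr : r ≠ 0) (hγ : γ - 1 ≠ 0)
    (hM : M = ∑ j, m j ^ 2)
    (hK : ∀ i, K i = ∑ j, m j * b i j)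
    (he : e = p / (γ - 1) + M / (2 * r))
    (hP : ∀ i, P i = (γ - 1) * (c i - K i / r + M * a i / (2 * r ^ 2)))
    (hP0 : P0 = (γ - 1) * (c0 - (∑ j, m j * b0 j) / r + M * a0 / (2 * r ^ 2)))
    (hRR : R = r * R1)
    (hAB : A = Bs * (p * R))
    (hE0 : a0 + ∑ i, b i i = 0)
    (hEj : ∀ j, b0 j + ∑ i, (((b i i * m j + m i * b i j) * r - m i * m j * a i) / r ^ 2
        + P i * (if j = i then 1 else 0)) = 0)
    (hEe : c0 + ∑ i, ((c i + P i) * (m i / r)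
        + (e + p) * ((b i i * r - m i * a i) / r ^ 2)) = 0) :
    (β * a0 * A + β * r * kap * Bs * (P0 * R - γ * p * R1 * a0))
      + ∑ i, ((b i i * r - m i * a i) / r ^ 2 * (β * r * A)
        + m i / r * (β * a i * A + β * r * kap * Bs * (P i * R - γ * p * R1 * a i))) = 0 := by
  have ha0 : a0 = ∑ i, -(b i i) := by rw [Finset.sum_neg_distrib]; linarith
  have hSX : ∀ i, ∑ j, m j * (((b i i * m j + m i * b i j) * r - m i * m j * a i) / r ^ 2)
      = (b i i * M + m i * K i) / r - m i * M * a i / r ^ 2 := by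
    intro i
    have h1 : ∀ j, m j * (((b i i * m j + m i * b i j) * r - m i * m j * a i) / r ^ 2)
        = b i i / r * m j ^ 2 + m i / r * (m j * b i j) - m i * a i / r ^ 2 * m j ^ 2 := by
      intro j; field_simp
    rw [Finset.sum_congr rfl fun j _ => h1 j]
    rw [Finset.sum_sub_distrib, Finset.sum_add_distrib, ← Finset.mul_sum, ← Finset.mul_sum,
      ← Finset.mul_sum, ← hM, ← hK i]
    ring
  have hb0 : ∀ j, b0 j = ∑ i, -(((b i i * m j + m i * b i j) * r - m i * m j * a i) / r ^ 2
      + (if j = i then P i else 0)) := by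
    intro j
    rw [Finset.sum_neg_distrib]
    have h2 : ∑ i, (((b i i * m j + m i * b i j) * r - m i * m j * a i) / r ^ 2
          + (if j = i then P i else 0))
        = ∑ i, (((b i i * m j + m i * b i j) * r - m i * m j * a i) / r ^ 2
          + P i * (if j = i then 1 else 0)) :=
      Finset.sum_congr rfl fun i _ => by by_cases h : j = i <;> simp [h]
    rw [h2]
    have := hEj j; linarith
  have hmb : ∑ j, m j * b0 j
      = ∑ i, -((b i i * M + m i * K i) / r - m i * M * a i / r ^ 2 + m i * P i) := by
    calc ∑ j, m j * b0 j
        = ∑ j, ∑ i, -(m j * (((b i i * m j + m i * b i j) * r - m i * m j * a i) / r ^ 2)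
            + (if j = i then m j * P i else 0)) := by
          refine Finset.sum_congr rfl fun j _ => ?_
          rw [hb0 j, Finset.mul_sum]
          refine Finset.sum_congr rfl fun i _ => ?_
          by_cases h : j = i <;> simp [h] <;> ring
      _ = ∑ i, ∑ j, -(m j * (((b i i * m j + m i * b i j) * r - m i * m j * a i) / r ^ 2)
            + (if j = i then m j * P i else 0)) := Finset.sum_comm
      _ = ∑ i, -((b i i * M + m i * K i) / r - m i * M * a i / r ^ 2 + m i * P i) := by
          refine Finset.sum_congr rfl fun i _ => ?_
          rw [Finset.sum_neg_distrib, Finset.sum_add_distrib, hSX i]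
          have h3 : ∑ j, (if j = i then m j * P i else 0) = m i * P i := by
            simpa using Finset.sum_ite_eq' Finset.univ i (fun j => m j * P i)
          rw [h3]
  have hc0 : c0 = ∑ i, -((c i + P i) * (m i / r)
      + (e + p) * ((b i i * r - m i * a i) / r ^ 2)) := by
    rw [Finset.sum_neg_distrib]; linarith
  have hP0s : P0 = ∑ i, (γ - 1) * (-((c i + P i) * (m i / r)
        + (e + p) * ((b i i * r - m i * a i) / r ^ 2))
      - -((b i i * M + m i * K i) / r - m i * M * a i / r ^ 2 + m i * P i) / r
      + M * -(b i i) / (2 * r ^ 2)) := by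
    rw [hP0, hc0, hmb, ha0, Finset.mul_sum, Finset.sum_div, Finset.sum_div,
      ← Finset.sum_sub_distrib, ← Finset.sum_add_distrib, Finset.mul_sum]
  have hT : β * a0 * A + β * r * kap * Bs * (P0 * R - γ * p * R1 * a0)
      = (β * A - β * r * kap * Bs * γ * p * R1) * a0 + β * r * kap * Bs * R * P0 := by ring
  rw [hT, ha0, hP0s, Finset.mul_sum, Finset.mul_sum, ← Finset.sum_add_distrib,
    ← Finset.sum_add_distrib]
  refine Finset.sum_eq_zero fun i _ => ?_
  rw [hP i, he, hAB, hRR]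
  field_simp
  ring

/-! ### Derivative values along curves -/

noncomputable def pDval (d : ℕ) (γ : ℝ) (Uz DW : Fin (d + 2) → ℝ) : ℝ :=
  (γ - 1) * (DW (Fin.last (d + 1))
    - (∑ j : Fin d, Uz (Fin.castSucc j.succ) * DW (Fin.castSucc j.succ)) / Uz 0
    + (∑ j : Fin d, Uz (Fin.castSucc j.succ) ^ 2) * DW 0 / (2 * Uz 0 ^ 2))

noncomputable def sDval (d : ℕ) (γ α β : ℝ) (Uz DW : Fin (d + 2) → ℝ) : ℝ :=
  β * DW 0 * (pOf d γ Uz * Uz 0 ^ (-γ)) ^ (1 / (α + γ))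
    + β * Uz 0 * (1 / (α + γ)) * (pOf d γ Uz * Uz 0 ^ (-γ)) ^ (1 / (α + γ) - 1)
      * (pDval d γ Uz DW * Uz 0 ^ (-γ) - γ * pOf d γ Uz * Uz 0 ^ (-γ - 1) * DW 0)

noncomputable def vDval (d : ℕ) (Uz DW : Fin (d + 2) → ℝ) (i : Fin d) : ℝ :=
  (DW (Fin.castSucc i.succ) * Uz 0 - Uz (Fin.castSucc i.succ) * DW 0) / Uz 0 ^ 2

section CompDerivs

variable {d : ℕ} {γ α β : ℝ} {g : ℝ → Fin (d + 2) → ℝ} {DW : Fin (d + 2) → ℝ} {s₀ : ℝ}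

lemma hasDerivAt_sumsq_comp (hg : ∀ k, HasDerivAt (fun s => g s k) (DW k) s₀) :
    HasDerivAt (fun s => ∑ j : Fin d, g s (Fin.castSucc j.succ) ^ 2)
      (2 * ∑ j : Fin d, g s₀ (Fin.castSucc j.succ) * DW (Fin.castSucc j.succ)) s₀ := by
  have h1 : HasDerivAt (fun s => ∑ j : Fin d, g s (Fin.castSucc j.succ) ^ 2)
      (∑ j : Fin d, (2 : ℕ) * g s₀ (Fin.castSucc j.succ) ^ (2 - 1)
        * DW (Fin.castSucc j.succ)) s₀ :=
    HasDerivAt.fun_sum fun j _ => (hg (Fin.castSucc j.succ)).pow 2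
  convert h1 using 1
  rw [Finset.mul_sum]
  exact Finset.sum_congr rfl fun j _ => by push_cast; ring

lemma hasDerivAt_pOf_comp (hg : ∀ k, HasDerivAt (fun s => g s k) (DW k) s₀)
    (h0 : g s₀ 0 ≠ 0) :
    HasDerivAt (fun s => pOf d γ (g s)) (pDval d γ (g s₀) DW) s₀ := by
  have h2r : 2 * g s₀ 0 ≠ 0 := by simpa using h0
  have h1 := (((hg (Fin.last (d + 1))).sub
    ((hasDerivAt_sumsq_comp hg).div ((hg 0).const_mul 2) h2r)).const_mul (γ - 1))
  have hfun : (fun s => pOf d γ (g s))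
      = fun s => (γ - 1) * (g s (Fin.last (d + 1))
        - (∑ j : Fin d, g s (Fin.castSucc j.succ) ^ 2) / (2 * g s 0)) := by
    funext s; rw [pOf]
  rw [hfun]
  refine h1.congr_deriv ?_
  rw [pDval]
  field_simp
  ring

lemma hasDerivAt_vOf_comp (hg : ∀ k, HasDerivAt (fun s => g s k) (DW k) s₀)
    (h0 : g s₀ 0 ≠ 0) (i : Fin d) :
    HasDerivAt (fun s => vOf d (g s) i) (vDval d (g s₀) DW i) s₀ :=
  (hg (Fin.castSucc i.succ)).div (hg 0) h0

lemma hasDerivAt_hartenShat_comp (hg : ∀ k, HasDerivAt (fun s => g s k) (DW k) s₀)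
    (h0 : 0 < g s₀ 0) (hp : 0 < pOf d γ (g s₀)) :
    HasDerivAt (fun s => hartenShat d γ α β (g s)) (sDval d γ α β (g s₀) DW) s₀ := by
  have h0' : g s₀ 0 ≠ 0 := ne_of_gt h0
  have hσ : 0 < pOf d γ (g s₀) * g s₀ 0 ^ (-γ) :=
    mul_pos hp (Real.rpow_pos_of_pos h0 _)
  have hR : HasDerivAt (fun s => g s 0 ^ (-γ))
      (DW 0 * (-γ) * g s₀ 0 ^ (-γ - 1)) s₀ := (hg 0).rpow_const (Or.inl h0')
  have hσd : HasDerivAt (fun s => pOf d γ (g s) * g s 0 ^ (-γ))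
      (pDval d γ (g s₀) DW * g s₀ 0 ^ (-γ)
        + pOf d γ (g s₀) * (DW 0 * (-γ) * g s₀ 0 ^ (-γ - 1))) s₀ :=
    (hasDerivAt_pOf_comp hg h0').mul hR
  have hσκ := hσd.rpow_const (p := 1 / (α + γ)) (Or.inl (ne_of_gt hσ))
  have h1 := ((hg 0).const_mul β).mul hσκ
  have hfun : (fun s => hartenShat d γ α β (g s))
      = fun s => β * g s 0 * (pOf d γ (g s) * g s 0 ^ (-γ)) ^ (1 / (α + γ)) := by
    funext s; rw [hartenShat, hartenS]
  rw [hfun]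
  refine h1.congr_deriv ?_
  rw [sDval]
  ring

lemma hasDerivAt_psi_comp (hg : ∀ k, HasDerivAt (fun s => g s k) (DW k) s₀)
    (h0 : 0 < g s₀ 0) (hp : 0 < pOf d γ (g s₀)) (i : Fin d) :
    HasDerivAt (fun s => vOf d (g s) i * hartenShat d γ α β (g s))
      (vDval d (g s₀) DW i * hartenShat d γ α β (g s₀)
        + vOf d (g s₀) i * sDval d γ α β (g s₀) DW) s₀ :=
  (hasDerivAt_vOf_comp hg (ne_of_gt h0) i).mul (hasDerivAt_hartenShat_comp hg h0 hp)

lemma hasDerivAt_flux0_comp (hg : ∀ k, HasDerivAt (fun s => g s k) (DW k) s₀)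
    (h0 : ∀ s, g s 0 ≠ 0) (i : Fin d) :
    HasDerivAt (fun s => fluxHat d γ i (g s) 0) (DW (Fin.castSucc i.succ)) s₀ := by
  have hfun : (fun s => fluxHat d γ i (g s) 0)
      = fun s => g s (Fin.castSucc i.succ) := funext fun s => fluxHat_zero i (h0 s)
  rw [hfun]; exact hg _

lemma hasDerivAt_fluxm_comp (hg : ∀ k, HasDerivAt (fun s => g s k) (DW k) s₀)
    (h0 : ∀ s, g s 0 ≠ 0) (i j : Fin d) :
    HasDerivAt (fun s => fluxHat d γ i (g s) (Fin.castSucc j.succ))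
      (((DW (Fin.castSucc i.succ) * g s₀ (Fin.castSucc j.succ)
          + g s₀ (Fin.castSucc i.succ) * DW (Fin.castSucc j.succ)) * g s₀ 0
         - g s₀ (Fin.castSucc i.succ) * g s₀ (Fin.castSucc j.succ) * DW 0) / g s₀ 0 ^ 2
        + pDval d γ (g s₀) DW * (if j = i then 1 else 0)) s₀ := by
  have hfun : (fun s => fluxHat d γ i (g s) (Fin.castSucc j.succ))
      = fun s => g s (Fin.castSucc i.succ) * g s (Fin.castSucc j.succ) / g s 0
          + pOf d γ (g s) * (if j = i then 1 else 0) :=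
    funext fun s => fluxHat_mid i j (h0 s)
  rw [hfun]
  exact (((hg _).mul (hg _)).div (hg 0) (h0 s₀)).add
    ((hasDerivAt_pOf_comp hg (h0 s₀)).mul_const _)

lemma hasDerivAt_fluxl_comp (hg : ∀ k, HasDerivAt (fun s => g s k) (DW k) s₀)
    (h0 : ∀ s, g s 0 ≠ 0) (hγ : γ - 1 ≠ 0) (i : Fin d) :
    HasDerivAt (fun s => fluxHat d γ i (g s) (Fin.last (d + 1)))
      ((DW (Fin.last (d + 1)) + pDval d γ (g s₀) DW)
          * (g s₀ (Fin.castSucc i.succ) / g s₀ 0)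
        + (g s₀ (Fin.last (d + 1)) + pOf d γ (g s₀)) * vDval d (g s₀) DW i) s₀ := by
  have hfun : (fun s => fluxHat d γ i (g s) (Fin.last (d + 1)))
      = fun s => (g s (Fin.last (d + 1)) + pOf d γ (g s))
          * (g s (Fin.castSucc i.succ) / g s 0) :=
    funext fun s => fluxHat_last i (h0 s) hγ
  rw [hfun]
  exact ((hg _).add (hasDerivAt_pOf_comp hg (h0 s₀))).mul ((hg _).div (hg 0) (h0 s₀))

end CompDerivs


/-! ### Flux derivative vector along a curve -/

noncomputable def fluxDval (d : ℕ) (γ : ℝ) (Uz DW : Fin (d + 2) → ℝ) (i : Fin d) :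
    Fin (d + 2) → ℝ :=
  Fin.cons (DW (Fin.castSucc i.succ))
    (Fin.snoc (fun j => ((DW (Fin.castSucc i.succ) * Uz (Fin.castSucc j.succ)
          + Uz (Fin.castSucc i.succ) * DW (Fin.castSucc j.succ)) * Uz 0
          - Uz (Fin.castSucc i.succ) * Uz (Fin.castSucc j.succ) * DW 0) / Uz 0 ^ 2
        + pDval d γ Uz DW * (if j = i then 1 else 0))
      ((DW (Fin.last (d + 1)) + pDval d γ Uz DW) * (Uz (Fin.castSucc i.succ) / Uz 0)
        + (Uz (Fin.last (d + 1)) + pOf d γ Uz) * vDval d Uz DW i))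

lemma fluxDval_zero {d : ℕ} {γ : ℝ} (Uz DW : Fin (d + 2) → ℝ) (i : Fin d) :
    fluxDval d γ Uz DW i 0 = DW (Fin.castSucc i.succ) := by
  rw [fluxDval, Fin.cons_zero]

lemma fluxDval_mid {d : ℕ} {γ : ℝ} (Uz DW : Fin (d + 2) → ℝ) (i j : Fin d) :
    fluxDval d γ Uz DW i (Fin.castSucc j.succ)
      = ((DW (Fin.castSucc i.succ) * Uz (Fin.castSucc j.succ)
          + Uz (Fin.castSucc i.succ) * DW (Fin.castSucc j.succ)) * Uz 0
          - Uz (Fin.castSucc i.succ) * Uz (Fin.castSucc j.succ) * DW 0) / Uz 0 ^ 2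
        + pDval d γ Uz DW * (if j = i then 1 else 0) := by
  have h : Fin.castSucc j.succ = (Fin.castSucc j).succ := (Fin.succ_castSucc j).symm
  conv_lhs => rw [h]
  rw [fluxDval, Fin.cons_succ, Fin.snoc_castSucc]

lemma fluxDval_last {d : ℕ} {γ : ℝ} (Uz DW : Fin (d + 2) → ℝ) (i : Fin d) :
    fluxDval d γ Uz DW i (Fin.last (d + 1))
      = (DW (Fin.last (d + 1)) + pDval d γ Uz DW) * (Uz (Fin.castSucc i.succ) / Uz 0)
        + (Uz (Fin.last (d + 1)) + pOf d γ Uz) * vDval d Uz DW i := by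
  rw [fluxDval, ← Fin.succ_last, Fin.cons_succ, Fin.snoc_last]

lemma hasDerivAt_fluxHat_comp {d : ℕ} {γ : ℝ} {g : ℝ → Fin (d + 2) → ℝ}
    {DW : Fin (d + 2) → ℝ} {s₀ : ℝ}
    (hg : ∀ k, HasDerivAt (fun s => g s k) (DW k) s₀)
    (h0 : ∀ s, g s 0 ≠ 0) (hγ1 : γ - 1 ≠ 0) (i : Fin d) :
    HasDerivAt (fun s => fluxHat d γ i (g s)) (fluxDval d γ (g s₀) DW i) s₀ := by
  refine hasDerivAt_pi.2 fun k => ?_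
  refine Fin.cases ?_ (fun k2 => ?_) k
  · rw [fluxDval_zero]
    exact hasDerivAt_flux0_comp hg h0 i
  · refine Fin.lastCases ?_ (fun j => ?_) k2
    · rw [Fin.succ_last, fluxDval_last]
      exact hasDerivAt_fluxl_comp hg h0 hγ1 i
    · rw [Fin.succ_castSucc, fluxDval_mid]
      exact hasDerivAt_fluxm_comp hg h0 i j

/-! ### The pointwise entropy conservation law -/

set_option maxHeartbeats 1000000 in
lemma harten_stepA (d : ℕ) (γ α β : ℝ) (hγ : 1 < γ)
    (U : ℝ × (Fin d → ℝ) → Fin (d + 2) → ℝ) (hU : ContDiff ℝ 1 U)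
    (hD : ∀ (t : ℝ) (x : Fin d → ℝ), 0 < U (t, x) 0 ∧ 0 < pOf d γ (U (t, x)))
    (hEuler : ∀ (t : ℝ) (x : Fin d → ℝ),
      deriv (fun s => U (s, x)) t +
        ∑ i, deriv (fun s => fluxHat d γ i (U (t, Function.update x i s))) (x i)
        = 0)
    (t : ℝ) (x : Fin d → ℝ) :
    deriv (fun s => hartenShat d γ α β (U (s, x))) t
      + ∑ i, deriv (fun s => vOf d (U (t, Function.update x i s)) i
          * hartenShat d γ α β (U (t, Function.update x i s))) (x i) = 0 := by
  have hγ1 : γ - 1 ≠ 0 := sub_ne_zero.mpr (ne_of_gt hγ)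
  have hUd : Differentiable ℝ U := hU.differentiable one_ne_zero
  have hr : 0 < U (t, x) 0 := (hD t x).1
  have hr' : U (t, x) 0 ≠ 0 := ne_of_gt hr
  have hp : 0 < pOf d γ (U (t, x)) := (hD t x).2
  -- derivatives of the components along the time line
  have hgT : ∀ k, HasDerivAt (fun s => U (s, x) k)
      (fderiv ℝ U (t, x) ((1 : ℝ), (0 : Fin d → ℝ)) k) t := by
    intro k
    have hc : HasDerivAt (fun s : ℝ => ((s, x) : ℝ × (Fin d → ℝ)))
        ((1 : ℝ), (0 : Fin d → ℝ)) t := (hasDerivAt_id t).prodMk (hasDerivAt_const t x)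
    have h1 : HasDerivAt (fun s => U (s, x))
        (fderiv ℝ U (t, x) ((1 : ℝ), (0 : Fin d → ℝ))) t :=
      (hUd (t, x)).hasFDerivAt.comp_hasDerivAt t hc
    exact hasDerivAt_pi.1 h1 k
  -- derivatives of the components along the spatial lines
  have hgX : ∀ (i : Fin d) (k : Fin (d + 2)), HasDerivAt (fun s => U (t, Function.update x i s) k)
      (fderiv ℝ U (t, x) ((0 : ℝ), (Pi.single i 1 : Fin d → ℝ)) k) (x i) := by
    intro i k
    have hc : HasDerivAt (fun s : ℝ => ((t, Function.update x i s) : ℝ × (Fin d → ℝ)))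
        ((0 : ℝ), (Pi.single i 1 : Fin d → ℝ)) (x i) :=
      (hasDerivAt_const (x i) t).prodMk (hasDerivAt_update x i (x i))
    have h1 : HasDerivAt (fun s => U (t, Function.update x i s))
        (fderiv ℝ U (t, Function.update x i (x i)) ((0 : ℝ), (Pi.single i 1 : Fin d → ℝ)))
        (x i) := (hUd _).hasFDerivAt.comp_hasDerivAt (x i) hc
    rw [Function.update_eq_self] at h1
    exact hasDerivAt_pi.1 h1 k
  have h0X : ∀ (i : Fin d) (s : ℝ), U (t, Function.update x i s) 0 ≠ 0 :=
    fun i s => ne_of_gt (hD t (Function.update x i s)).1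
  -- rewrite the Euler equations
  have hUt : HasDerivAt (fun s => U (s, x))
      (fderiv ℝ U (t, x) ((1 : ℝ), (0 : Fin d → ℝ))) t := hasDerivAt_pi.2 hgT
  have hFlux : ∀ i : Fin d, HasDerivAt
      (fun s => fluxHat d γ i (U (t, Function.update x i s)))
      (fluxDval d γ (U (t, x)) (fderiv ℝ U (t, x) ((0 : ℝ), (Pi.single i 1 : Fin d → ℝ))) i)
      (x i) := by
    intro i
    have h1 := hasDerivAt_fluxHat_comp (g := fun s => U (t, Function.update x i s))
      (hgX i) (h0X i) hγ1 i
    simpa only [Function.update_eq_self] using h1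
  have hE := hEuler t x
  rw [hUt.deriv, show (∑ i, deriv (fun s => fluxHat d γ i (U (t, Function.update x i s))) (x i))
      = ∑ i, fluxDval d γ (U (t, x))
          (fderiv ℝ U (t, x) ((0 : ℝ), (Pi.single i 1 : Fin d → ℝ))) i
      from Finset.sum_congr rfl fun i _ => (hFlux i).deriv] at hE
  -- extract the component equations
  have hE0 : fderiv ℝ U (t, x) ((1 : ℝ), (0 : Fin d → ℝ)) 0
      + ∑ i, fderiv ℝ U (t, x) ((0 : ℝ), (Pi.single i 1 : Fin d → ℝ)) (Fin.castSucc i.succ)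
      = 0 := by
    have h1 := congrFun hE 0
    simpa only [Pi.add_apply, Finset.sum_apply, Pi.zero_apply, fluxDval_zero] using h1
  have hEj : ∀ j : Fin d, fderiv ℝ U (t, x) ((1 : ℝ), (0 : Fin d → ℝ)) (Fin.castSucc j.succ)
      + ∑ i, (((fderiv ℝ U (t, x) ((0 : ℝ), (Pi.single i 1 : Fin d → ℝ)) (Fin.castSucc i.succ)
            * U (t, x) (Fin.castSucc j.succ)
          + U (t, x) (Fin.castSucc i.succ)
            * fderiv ℝ U (t, x) ((0 : ℝ), (Pi.single i 1 : Fin d → ℝ)) (Fin.castSucc j.succ))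
            * U (t, x) 0
          - U (t, x) (Fin.castSucc i.succ) * U (t, x) (Fin.castSucc j.succ)
            * fderiv ℝ U (t, x) ((0 : ℝ), (Pi.single i 1 : Fin d → ℝ)) 0) / U (t, x) 0 ^ 2
        + pDval d γ (U (t, x)) (fderiv ℝ U (t, x) ((0 : ℝ), (Pi.single i 1 : Fin d → ℝ)))
          * (if j = i then 1 else 0)) = 0 := by
    intro j
    have h1 := congrFun hE (Fin.castSucc j.succ)
    simpa only [Pi.add_apply, Finset.sum_apply, Pi.zero_apply, fluxDval_mid] using h1
  have hEe : fderiv ℝ U (t, x) ((1 : ℝ), (0 : Fin d → ℝ)) (Fin.last (d + 1))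
      + ∑ i, ((fderiv ℝ U (t, x) ((0 : ℝ), (Pi.single i 1 : Fin d → ℝ)) (Fin.last (d + 1))
          + pDval d γ (U (t, x)) (fderiv ℝ U (t, x) ((0 : ℝ), (Pi.single i 1 : Fin d → ℝ))))
          * (U (t, x) (Fin.castSucc i.succ) / U (t, x) 0)
        + (U (t, x) (Fin.last (d + 1)) + pOf d γ (U (t, x)))
          * vDval d (U (t, x)) (fderiv ℝ U (t, x) ((0 : ℝ), (Pi.single i 1 : Fin d → ℝ))) i)
      = 0 := by
    have h1 := congrFun hE (Fin.last (d + 1))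
    simpa only [Pi.add_apply, Finset.sum_apply, Pi.zero_apply, fluxDval_last] using h1
  -- rewrite propagated derivatives in the goal
  have hS0 : HasDerivAt (fun s => hartenShat d γ α β (U (s, x)))
      (sDval d γ α β (U (t, x)) (fderiv ℝ U (t, x) ((1 : ℝ), (0 : Fin d → ℝ)))) t :=
    hasDerivAt_hartenShat_comp hgT hr hp
  have hPsi : ∀ i : Fin d, HasDerivAt
      (fun s => vOf d (U (t, Function.update x i s)) i
        * hartenShat d γ α β (U (t, Function.update x i s)))
      (vDval d (U (t, x)) (fderiv ℝ U (t, x) ((0 : ℝ), (Pi.single i 1 : Fin d → ℝ))) i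
          * hartenShat d γ α β (U (t, x))
        + vOf d (U (t, x)) i
          * sDval d γ α β (U (t, x))
            (fderiv ℝ U (t, x) ((0 : ℝ), (Pi.single i 1 : Fin d → ℝ)))) (x i) := by
    intro i
    have h1 := hasDerivAt_psi_comp (γ := γ) (α := α) (β := β)
      (g := fun s => U (t, Function.update x i s)) (hgX i)
      (by simpa only [Function.update_eq_self] using hr)
      (by simpa only [Function.update_eq_self] using hp) i
    simpa only [Function.update_eq_self] using h1
  rw [hS0.deriv, show (∑ i, deriv (fun s => vOf d (U (t, Function.update x i s)) i
        * hartenShat d γ α β (U (t, Function.update x i s))) (x i))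
      = ∑ i, (vDval d (U (t, x)) (fderiv ℝ U (t, x) ((0 : ℝ), (Pi.single i 1 : Fin d → ℝ))) i
          * hartenShat d γ α β (U (t, x))
        + vOf d (U (t, x)) i
          * sDval d γ α β (U (t, x))
            (fderiv ℝ U (t, x) ((0 : ℝ), (Pi.single i 1 : Fin d → ℝ))))
      from Finset.sum_congr rfl fun i _ => (hPsi i).deriv]
  -- relations for the rpow quantities
  have hσ : 0 < pOf d γ (U (t, x)) * U (t, x) 0 ^ (-γ) :=
    mul_pos hp (Real.rpow_pos_of_pos hr _)
  have hRR : U (t, x) 0 ^ (-γ) = U (t, x) 0 * U (t, x) 0 ^ (-γ - 1) := by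
    nth_rewrite 1 [show (-γ : ℝ) = 1 + (-γ - 1) by ring]
    rw [Real.rpow_add hr, Real.rpow_one]
  have hAB : (pOf d γ (U (t, x)) * U (t, x) 0 ^ (-γ)) ^ (1 / (α + γ))
      = (pOf d γ (U (t, x)) * U (t, x) 0 ^ (-γ)) ^ (1 / (α + γ) - 1)
        * (pOf d γ (U (t, x)) * U (t, x) 0 ^ (-γ)) := by
    nth_rewrite 1 [show (1 / (α + γ) : ℝ) = (1 / (α + γ) - 1) + 1 by ring]
    rw [Real.rpow_add hσ, Real.rpow_one]
  have he : U (t, x) (Fin.last (d + 1)) = pOf d γ (U (t, x)) / (γ - 1)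
      + (∑ j : Fin d, U (t, x) (Fin.castSucc j.succ) ^ 2) / (2 * U (t, x) 0) := by
    rw [pOf]
    field_simp
    ring
  simp only [sDval, vDval, hartenShat, hartenS, vOf] at *
  exact harten_alg d γ β (1 / (α + γ)) (U (t, x) 0) (pOf d γ (U (t, x)))
    (U (t, x) (Fin.last (d + 1))) (∑ j : Fin d, U (t, x) (Fin.castSucc j.succ) ^ 2)
    (U (t, x) 0 ^ (-γ)) (U (t, x) 0 ^ (-γ - 1))
    ((pOf d γ (U (t, x)) * U (t, x) 0 ^ (-γ)) ^ (1 / (α + γ)))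
    ((pOf d γ (U (t, x)) * U (t, x) 0 ^ (-γ)) ^ (1 / (α + γ) - 1))
    (fun j => U (t, x) (Fin.castSucc j.succ))
    (fun i => fderiv ℝ U (t, x) ((0 : ℝ), (Pi.single i 1 : Fin d → ℝ)) 0)
    (fun i => fderiv ℝ U (t, x) ((0 : ℝ), (Pi.single i 1 : Fin d → ℝ)) (Fin.last (d + 1)))
    (fun i => ∑ j : Fin d, U (t, x) (Fin.castSucc j.succ)
      * fderiv ℝ U (t, x) ((0 : ℝ), (Pi.single i 1 : Fin d → ℝ)) (Fin.castSucc j.succ))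
    (fun i => pDval d γ (U (t, x)) (fderiv ℝ U (t, x) ((0 : ℝ), (Pi.single i 1 : Fin d → ℝ))))
    (fun i j => fderiv ℝ U (t, x) ((0 : ℝ), (Pi.single i 1 : Fin d → ℝ)) (Fin.castSucc j.succ))
    (fderiv ℝ U (t, x) ((1 : ℝ), (0 : Fin d → ℝ)) 0)
    (fderiv ℝ U (t, x) ((1 : ℝ), (0 : Fin d → ℝ)) (Fin.last (d + 1)))
    (pDval d γ (U (t, x)) (fderiv ℝ U (t, x) ((1 : ℝ), (0 : Fin d → ℝ))))
    (fun j => fderiv ℝ U (t, x) ((1 : ℝ), (0 : Fin d → ℝ)) (Fin.castSucc j.succ))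
    hr' hγ1 rfl (fun i => rfl) he (fun i => rfl) rfl hRR hAB hE0 hEj hEe

/-! ### Smoothness of the entropy and entropy flux in conservative variables -/

lemma contDiff_hartenShat_comp {d : ℕ} {γ α β : ℝ}
    {U : ℝ × (Fin d → ℝ) → Fin (d + 2) → ℝ} (hU : ContDiff ℝ 1 U)
    (hD : ∀ z : ℝ × (Fin d → ℝ), 0 < U z 0 ∧ 0 < pOf d γ (U z)) :
    ContDiff ℝ 1 (fun z => hartenShat d γ α β (U z)) := by
  have hcomp : ∀ k : Fin (d + 2), ContDiff ℝ 1 (fun z => U z k) := fun k => contDiff_pi.1 hU k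
  have hpOf : ContDiff ℝ 1 (fun z => pOf d γ (U z)) := by
    have hfun : (fun z => pOf d γ (U z)) = fun z => (γ - 1) * (U z (Fin.last (d + 1))
        - (∑ i : Fin d, U z (Fin.castSucc i.succ) ^ 2) / (2 * U z 0)) := by
      funext z; rw [pOf]
    rw [hfun]
    exact contDiff_const.mul ((hcomp (Fin.last (d + 1))).sub
      ((ContDiff.sum fun i _ => (hcomp (Fin.castSucc i.succ)).pow 2).div
        (contDiff_const.mul (hcomp 0))
        (fun z => by have := (hD z).1; positivity)))
  have hfun : (fun z => hartenShat d γ α β (U z))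
      = fun z => β * U z 0 * (pOf d γ (U z) * U z 0 ^ (-γ)) ^ (1 / (α + γ)) := by
    funext z; rw [hartenShat, hartenS]
  rw [hfun, contDiff_iff_contDiffAt]
  intro z
  have h0 := (hD z).1
  have hp := (hD z).2
  have hρ : ContDiffAt ℝ 1 (fun z => U z 0) z := (hcomp 0).contDiffAt
  have hR : ContDiffAt ℝ 1 (fun z => U z 0 ^ (-γ)) z := hρ.rpow_const_of_ne (ne_of_gt h0)
  have hσ : ContDiffAt ℝ 1 (fun z => pOf d γ (U z) * U z 0 ^ (-γ)) z :=
    hpOf.contDiffAt.mul hR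
  have hσκ := hσ.rpow_const_of_ne (p := 1 / (α + γ))
    (ne_of_gt (mul_pos hp (Real.rpow_pos_of_pos h0 _)))
  exact (contDiffAt_const.mul hρ).mul hσκ

lemma contDiff_psi_comp {d : ℕ} {γ α β : ℝ}
    {U : ℝ × (Fin d → ℝ) → Fin (d + 2) → ℝ} (hU : ContDiff ℝ 1 U)
    (hD : ∀ z : ℝ × (Fin d → ℝ), 0 < U z 0 ∧ 0 < pOf d γ (U z)) (i : Fin d) :
    ContDiff ℝ 1 (fun z => vOf d (U z) i * hartenShat d γ α β (U z)) := by
  have hvOf : ContDiff ℝ 1 (fun z => vOf d (U z) i) := by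
    have hfun : (fun z => vOf d (U z) i)
        = fun z => U z (Fin.castSucc i.succ) / U z 0 := by funext z; rw [vOf]
    rw [hfun]
    exact (contDiff_pi.1 hU _).div (contDiff_pi.1 hU 0) fun z => ne_of_gt (hD z).1
  exact hvOf.mul (contDiff_hartenShat_comp hU hD)

/-! ### The main theorem -/

/-- Under the Harten setup, for a continuously differentiable, spatially
`L`-periodic solution of the Euler equations taking values in
`D = {(ρ, m, e) : ρ > 0, (γ−1)(e − ‖m‖²/(2ρ)) > 0}`, the total entropy
`t ↦ ∫_{[0,L]^d} Ŝ(U(t,x)) dx` is constant in `t`: its derivative vanishes for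
every `t`. -/
theorem harten_total_entropy_conservation_periodic
    (d : ℕ) (hd : 1 ≤ d) (γ α β : ℝ) (hγ : 1 < γ) (hα : 0 < α ∨ α < -γ)
    (hβ : β = -(γ + α) / (γ - 1)) (L : ℝ) (hL : 0 < L)
    (U : ℝ × (Fin d → ℝ) → Fin (d + 2) → ℝ)
    (hU : ContDiff ℝ 1 U)
    (hD : ∀ (t : ℝ) (x : Fin d → ℝ), 0 < U (t, x) 0 ∧ 0 < pOf d γ (U (t, x)))
    (hEuler : ∀ (t : ℝ) (x : Fin d → ℝ),
      deriv (fun s => U (s, x)) t +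
        ∑ i, deriv (fun s => fluxHat d γ i (U (t, Function.update x i s))) (x i)
        = 0)
    (hperiodic : ∀ (t : ℝ) (x : Fin d → ℝ) (i : Fin d),
      U (t, x + L • (Pi.single i 1 : Fin d → ℝ)) = U (t, x)) :
    ∀ t : ℝ,
      HasDerivAt
        (fun s => ∫ x in Set.Icc (0 : Fin d → ℝ) (fun _ => L),
          hartenShat d γ α β (U (s, x)))
        0 t := by
  intro t
  obtain ⟨n, rfl⟩ : ∃ n, d = n + 1 := ⟨d - 1, by omega⟩
  have hD' : ∀ z : ℝ × (Fin (n + 1) → ℝ), 0 < U z 0 ∧ 0 < pOf (n + 1) γ (U z) :=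
    fun z => hD z.1 z.2
  have hSc : ContDiff ℝ 1 (fun z => hartenShat (n + 1) γ α β (U z)) :=
    contDiff_hartenShat_comp hU hD'
  have hPsiC : ∀ i : Fin (n + 1),
      ContDiff ℝ 1 (fun z => vOf (n + 1) (U z) i * hartenShat (n + 1) γ α β (U z)) :=
    fun i => contDiff_psi_comp hU hD' i
  have hdPhi : Continuous (fun z : ℝ × (Fin (n + 1) → ℝ) =>
      fderiv ℝ (fun z => hartenShat (n + 1) γ α β (U z)) z ((1 : ℝ), (0 : Fin (n + 1) → ℝ))) :=
    (hSc.continuous_fderiv one_ne_zero).clm_apply continuous_const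
  have hline : ∀ (s : ℝ) (x : Fin (n + 1) → ℝ),
      HasDerivAt (fun τ => hartenShat (n + 1) γ α β (U (τ, x)))
        (fderiv ℝ (fun z => hartenShat (n + 1) γ α β (U z)) (s, x)
          ((1 : ℝ), (0 : Fin (n + 1) → ℝ))) s := by
    intro s x
    have hc : HasDerivAt (fun τ : ℝ => ((τ, x) : ℝ × (Fin (n + 1) → ℝ)))
        ((1 : ℝ), (0 : Fin (n + 1) → ℝ)) s := (hasDerivAt_id s).prodMk (hasDerivAt_const s x)
    exact ((hSc.differentiable one_ne_zero) (s, x)).hasFDerivAt.comp_hasDerivAt s hc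
  set FF : (Fin (n + 1) → ℝ) → (Fin (n + 1) → ℝ) :=
    fun y j => vOf (n + 1) (U (t, y)) j * hartenShat (n + 1) γ α β (U (t, y)) with hFFdef
  have hFFc : ContDiff ℝ 1 FF :=
    contDiff_pi.2 fun j => (hPsiC j).comp (contDiff_const.prodMk contDiff_id)
  -- pointwise divergence identity
  have hdiv : ∀ x : Fin (n + 1) → ℝ,
      fderiv ℝ (fun z => hartenShat (n + 1) γ α β (U z)) (t, x)
          ((1 : ℝ), (0 : Fin (n + 1) → ℝ))
        = -∑ j, fderiv ℝ FF x (Pi.single j 1) j := by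
    intro x
    have hstep := harten_stepA (n + 1) γ α β hγ U hU hD hEuler t x
    rw [(hline t x).deriv] at hstep
    have hBj : ∀ j : Fin (n + 1), HasDerivAt
        (fun s => vOf (n + 1) (U (t, Function.update x j s)) j
          * hartenShat (n + 1) γ α β (U (t, Function.update x j s)))
        (fderiv ℝ FF x (Pi.single j 1) j) (x j) := by
      intro j
      have hc := hasDerivAt_update x j (x j)
      have h1 : HasDerivAt (fun s => FF (Function.update x j s))
          (fderiv ℝ FF x (Pi.single j 1)) (x j) := by
        have h2 := ((hFFc.differentiable one_ne_zero)
          (Function.update x j (x j))).hasFDerivAt.comp_hasDerivAt (x j) hc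
        rwa [Function.update_eq_self] at h2
      exact hasDerivAt_pi.1 h1 j
    rw [show (∑ i : Fin (n + 1), deriv (fun s => vOf (n + 1) (U (t, Function.update x i s)) i
          * hartenShat (n + 1) γ α β (U (t, Function.update x i s))) (x i))
        = ∑ j : Fin (n + 1), fderiv ℝ FF x (Pi.single j 1) j
      from Finset.sum_congr rfl fun j _ => (hBj j).deriv] at hstep
    linarith [hstep]
  -- divergence theorem: the integral of the divergence vanishes by periodicity
  have hle : (0 : Fin (n + 1) → ℝ) ≤ fun _ => L := fun i => le_of_lt hL
  have hHi : MeasureTheory.IntegrableOn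
      (fun y => ∑ j, fderiv ℝ FF y (Pi.single j 1) j)
      (Set.Icc (0 : Fin (n + 1) → ℝ) (fun _ => L)) := by
    refine ContinuousOn.integrableOn_compact isCompact_Icc ?_
    refine Continuous.continuousOn ?_
    exact continuous_finset_sum _ fun j _ =>
      (continuous_apply j).comp ((hFFc.continuous_fderiv one_ne_zero).clm_apply continuous_const)
  have hdivthm := MeasureTheory.integral_divergence_of_hasFDerivAt_off_countable
    (a := (0 : Fin (n + 1) → ℝ)) (b := fun _ => L) hle FF (fun y => fderiv ℝ FF y)
    ∅ Set.countable_empty hFFc.continuous.continuousOn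
    (fun y _ => ((hFFc.differentiable one_ne_zero) y).hasFDerivAt) hHi
  have hfaces : ∀ (i : Fin (n + 1)) (y : Fin n → ℝ),
      FF (i.insertNth L y) i = FF (i.insertNth 0 y) i := by
    intro i y
    have hins : i.insertNth L y = i.insertNth 0 y + L • (Pi.single i 1 : Fin (n + 1) → ℝ) := by
      funext j
      refine Fin.succAboveCases i ?_ ?_ j
      · simp
      · intro k
        simp [Fin.insertNth_apply_succAbove, Pi.single_eq_of_ne (Fin.succAbove_ne i k)]
    rw [hins, hFFdef]
    simp only []
    rw [hperiodic t _ i]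
  have hC0 : (∫ y in Set.Icc (0 : Fin (n + 1) → ℝ) (fun _ => L),
      ∑ j, fderiv ℝ FF y (Pi.single j 1) j) = 0 := by
    rw [hdivthm]
    refine Finset.sum_eq_zero fun i _ => ?_
    rw [sub_eq_zero]
    have heq : (fun y => FF (i.insertNth ((fun _ : Fin (n + 1) => L) i) y) i)
        = fun y => FF (i.insertNth ((0 : Fin (n + 1) → ℝ) i) y) i :=
      funext fun y => by simpa using hfaces i y
    rw [heq]
  have hCt : (∫ x in Set.Icc (0 : Fin (n + 1) → ℝ) (fun _ => L),
      fderiv ℝ (fun z => hartenShat (n + 1) γ α β (U z)) (t, x)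
        ((1 : ℝ), (0 : Fin (n + 1) → ℝ))) = 0 := by
    rw [show (fun x => fderiv ℝ (fun z => hartenShat (n + 1) γ α β (U z)) (t, x)
          ((1 : ℝ), (0 : Fin (n + 1) → ℝ)))
        = fun x => -(∑ j, fderiv ℝ FF x (Pi.single j 1) j)
      from funext fun x => hdiv x]
    rw [MeasureTheory.integral_neg, hC0, neg_zero]
  -- differentiation under the integral sign
  obtain ⟨C, hC⟩ := (IsCompact.prod isCompact_Icc isCompact_Icc :
      IsCompact ((Set.Icc (t - 1) (t + 1)) ×ˢ
        (Set.Icc (0 : Fin (n + 1) → ℝ) (fun _ => L)))).exists_bound_of_continuousOn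
    hdPhi.continuousOn
  have key := hasDerivAt_integral_of_dominated_loc_of_deriv_le
    (μ := MeasureTheory.volume.restrict (Set.Icc (0 : Fin (n + 1) → ℝ) (fun _ => L)))
    (F := fun s x => hartenShat (n + 1) γ α β (U (s, x)))
    (F' := fun s x => fderiv ℝ (fun z => hartenShat (n + 1) γ α β (U z)) (s, x)
      ((1 : ℝ), (0 : Fin (n + 1) → ℝ)))
    (x₀ := t) (bound := fun _ => C) (s := Metric.ball t 1) (Metric.ball_mem_nhds t one_pos)
    (Filter.Eventually.of_forall fun s =>
      (hSc.continuous.comp (Continuous.prodMk_right s)).aestronglyMeasurable)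
    (ContinuousOn.integrableOn_compact isCompact_Icc
      (hSc.continuous.comp (Continuous.prodMk_right t)).continuousOn)
    ((hdPhi.comp (Continuous.prodMk_right t)).aestronglyMeasurable)
    ?_ (integrableOn_const isCompact_Icc.measure_lt_top.ne)
    (MeasureTheory.ae_of_all _ fun x s _ => hline s x)
  · have hfinal := key.2
    rw [hCt] at hfinal
    exact hfinal
  · filter_upwards [MeasureTheory.ae_restrict_mem measurableSet_Icc] with x hx s hs
    refine hC (s, x) ⟨?_, hx⟩
    have h1 : |s - t| < 1 := by
      have := Metric.mem_ball.1 hs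
      rwa [Real.dist_eq] at this
    rw [Set.mem_Icc]
    rcases abs_lt.1 h1 with ⟨h2, h3⟩
    constructor <;> linarith
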